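/- Let {ρ_i}_{i=1}^k be density matrices on a d-dimensional complex Hilbert space with k ≥ 3, and define ρ̂_j = (1/(k−1)) ∑_{i≠j} ρ_i. If the set {ρ_i} is pairwise orthogonal, i.e. tr(ρ_j ρ_l) = 0 for all j ≠ l, then F(ρ̂_j, ρ̂_l) = (k−2)/(k−1) for all j ≠ l, where F denotes the fidelity. -/

import Mathlib

open Matrix BigOperators ComplexOrder Classical

/-- The positive semidefinite square root of a matrix (junk value `0` if the
matrix is not positive semidefinite). -/
noncomputable def psqrt {d : ℕ} (A : Matrix (Fin d) (Fin d) ℂ) :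
    Matrix (Fin d) (Fin d) ℂ :=
  if h : A.PosSemidef then
    h.1.eigenvectorUnitary.1 * diagonal ((↑) ∘ Real.sqrt ∘ h.1.eigenvalues) *
      (star h.1.eigenvectorUnitary : Matrix (Fin d) (Fin d) ℂ)
  else 0

/-- The fidelity `F(ρ,σ) = tr((√ρ σ √ρ)^{1/2})` of two positive semidefinite
matrices. -/
noncomputable def fidelity {d : ℕ} (ρ σ : Matrix (Fin d) (Fin d) ℂ) : ℝ :=
  (psqrt (psqrt ρ * σ * psqrt ρ)).trace.re

noncomputable def Matrix.PosSemidef.sqrt {d : ℕ} {A : Matrix (Fin d) (Fin d) ℂ} (hA : A.PosSemidef) :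
    Matrix (Fin d) (Fin d) ℂ :=
  hA.1.eigenvectorUnitary.1 * diagonal ((↑) ∘ Real.sqrt ∘ hA.1.eigenvalues) *
    (star hA.1.eigenvectorUnitary : Matrix (Fin d) (Fin d) ℂ)

open scoped MatrixOrder in
lemma Matrix.PosSemidef.sqrt_eq_cfc_sqrt {d : ℕ} {A : Matrix (Fin d) (Fin d) ℂ} (hA : A.PosSemidef) :
    hA.sqrt = CFC.sqrt A := by
  rw [CFC.sqrt_eq_cfc, cfc_nnreal_eq_real _ A, hA.1.cfc_eq]
  simp only [IsHermitian.cfc, Matrix.PosSemidef.sqrt, Unitary.conjStarAlgAut_apply]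
  congr 3
  funext i
  simp [Real.coe_sqrt, Real.coe_toNNReal', max_eq_left (hA.eigenvalues_nonneg i)]

open scoped MatrixOrder in
lemma Matrix.PosSemidef.posSemidef_sqrt {d : ℕ} {A : Matrix (Fin d) (Fin d) ℂ} (hA : A.PosSemidef) :
    hA.sqrt.PosSemidef := by
  rw [hA.sqrt_eq_cfc_sqrt]; exact (CFC.sqrt_nonneg A).posSemidef

open scoped MatrixOrder in
lemma Matrix.PosSemidef.sqrt_mul_self {d : ℕ} {A : Matrix (Fin d) (Fin d) ℂ} (hA : A.PosSemidef) :
    hA.sqrt * hA.sqrt = A := by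
  rw [hA.sqrt_eq_cfc_sqrt]; exact CFC.sqrt_mul_sqrt_self A hA.nonneg

open scoped MatrixOrder in
lemma Matrix.PosSemidef.eq_sqrt_of_sq_eq {d : ℕ} {A : Matrix (Fin d) (Fin d) ℂ} (hA : A.PosSemidef)
    (B : Matrix (Fin d) (Fin d) ℂ) (hAB : A ^ 2 = B) :
    A = (hAB ▸ hA.pow 2 : PosSemidef B).sqrt := by
  have hB : B.PosSemidef := hAB ▸ hA.pow 2
  rw [hB.sqrt_eq_cfc_sqrt, eq_comm, CFC.sqrt_eq_iff _ _ hB.nonneg hA.nonneg, ← sq, hAB]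


lemma psd_smul_real {d : ℕ} {A : Matrix (Fin d) (Fin d) ℂ} (hA : A.PosSemidef)
    {t : ℝ} (ht : 0 ≤ t) : ((t : ℂ) • A).PosSemidef := by
  constructor
  · unfold Matrix.IsHermitian
    rw [conjTranspose_smul, hA.1.eq]
    congr 1
    simp
  · exact (hA.smul (show (0:ℂ) ≤ t by exact_mod_cast ht)).2

open scoped MatrixOrder in
lemma psd_trace_zero {d : ℕ} {A : Matrix (Fin d) (Fin d) ℂ} (hA : A.PosSemidef)
    (h : A.trace = 0) : A = 0 := by
  obtain ⟨B, hB⟩ := CStarAlgebra.nonneg_iff_eq_star_mul_self.mp hA.nonneg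
  rw [star_eq_conjTranspose] at hB
  subst hB
  rw [Matrix.conjTranspose_mul_self_eq_zero]
  have htr : (Bᴴ * B).trace = ∑ i : Fin d, ∑ j : Fin d, (Complex.normSq (B j i) : ℂ) := by
    simp only [Matrix.trace, Matrix.diag, Matrix.mul_apply, Matrix.conjTranspose_apply]
    congr 1; ext i; congr 1; ext j
    rw [RCLike.star_def, ← Complex.normSq_eq_conj_mul_self]
  rw [htr] at h
  have h' : ∑ i : Fin d, ∑ j : Fin d, Complex.normSq (B j i) = 0 := by
    exact_mod_cast h
  ext i j
  have := (Finset.sum_eq_zero_iff_of_nonneg (fun i _ =>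
    Finset.sum_nonneg fun j _ => Complex.normSq_nonneg _)).mp h' j (Finset.mem_univ _)
  have := (Finset.sum_eq_zero_iff_of_nonneg (fun j _ => Complex.normSq_nonneg _)).mp this i
    (Finset.mem_univ _)
  simpa using Complex.normSq_eq_zero.mp this

lemma sqrt_mul_sqrt_eq_zero {d : ℕ} {A B : Matrix (Fin d) (Fin d) ℂ}
    (hA : A.PosSemidef) (hB : B.PosSemidef) (h : (A * B).trace = 0) :
    hA.sqrt * hB.sqrt = 0 := by
  set a := hA.sqrt with ha
  set b := hB.sqrt with hb
  have haH : aᴴ = a := hA.posSemidef_sqrt.1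
  have hbH : bᴴ = b := hB.posSemidef_sqrt.1
  have key : (b * a)ᴴ * (b * a) = 0 := by
    apply psd_trace_zero (Matrix.posSemidef_conjTranspose_mul_self _)
    have : (b * a)ᴴ * (b * a) = a * (b * b) * a := by
      rw [conjTranspose_mul, haH, hbH]; noncomm_ring
    rw [this, Matrix.trace_mul_cycle, hA.sqrt_mul_self, hB.sqrt_mul_self, h]
  have hba : b * a = 0 := Matrix.conjTranspose_mul_self_eq_zero.mp key
  calc a * b = (b * a)ᴴ := by rw [conjTranspose_mul, haH, hbH]
    _ = 0 := by rw [hba]; simp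

lemma sum_mul_sum_orthog {d k : ℕ} (s t : Finset (Fin k))
    (f g : Fin k → Matrix (Fin d) (Fin d) ℂ)
    (h : ∀ i ∈ s, ∀ m ∈ t, i ≠ m → f i * g m = 0) :
    (∑ i ∈ s, f i) * (∑ m ∈ t, g m) = ∑ i ∈ s ∩ t, f i * g i := by
  rw [Finset.sum_mul_sum]
  have : ∀ i ∈ s, ∑ m ∈ t, f i * g m = if i ∈ t then f i * g i else 0 := by
    intro i hi
    by_cases hit : i ∈ t
    · rw [if_pos hit]
      exact Finset.sum_eq_single_of_mem i hit fun m hm hmi => h i hi m hm (Ne.symm hmi)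
    · rw [if_neg hit]
      exact Finset.sum_eq_zero fun m hm => h i hi m hm (fun e => hit (e ▸ hm))
  rw [Finset.sum_congr rfl this, ← Finset.sum_filter, Finset.filter_mem_eq_inter]

/-- If the density matrices `ρᵢ` are pairwise orthogonal, then the uniform
mixtures `ρ̂ⱼ = (1/(k-1)) ∑_{i≠j} ρᵢ` satisfy `F(ρ̂ⱼ, ρ̂ₗ) = (k-2)/(k-1)`
for all `j ≠ l`. -/
theorem fidelity_of_leave_one_out_of_orthogonal
    {d k : ℕ} (hk : 3 ≤ k) (ρ : Fin k → Matrix (Fin d) (Fin d) ℂ)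
    (hρ : ∀ i, (ρ i).PosSemidef) (hρtr : ∀ i, (ρ i).trace = 1)
    (ρhat : Fin k → Matrix (Fin d) (Fin d) ℂ)
    (hρhat : ∀ j, ρhat j = ((k : ℂ) - 1)⁻¹ • ∑ i ∈ Finset.univ \ {j}, ρ i)
    (horth : ∀ j l, j ≠ l → (ρ j * ρ l).trace = 0) :
    ∀ j l, j ≠ l → fidelity (ρhat j) (ρhat l) = ((k : ℝ) - 2) / ((k : ℝ) - 1) := by
  intro j l hjl
  set c : ℂ := ((k : ℂ) - 1)⁻¹ with hcdef
  have hk1R : (0:ℝ) ≤ ((k:ℝ) - 1)⁻¹ := by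
    have h3 : (3:ℝ) ≤ (k:ℝ) := by exact_mod_cast hk
    exact inv_nonneg.mpr (by linarith)
  have hc : c = ((((k:ℝ) - 1)⁻¹ : ℝ) : ℂ) := by
    rw [hcdef]; push_cast; ring
  set a : Fin k → Matrix (Fin d) (Fin d) ℂ := fun i => (hρ i).sqrt with hadef
  have hapsd : ∀ i, (a i).PosSemidef := fun i => (hρ i).posSemidef_sqrt
  have haa : ∀ i, a i * a i = ρ i := fun i => (hρ i).sqrt_mul_self
  have hab : ∀ i m, i ≠ m → a i * a m = 0 := fun i m h =>
    sqrt_mul_sqrt_eq_zero (hρ i) (hρ m) (horth i m h)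
  have haB : ∀ i m, i ≠ m → a i * ρ m = 0 := fun i m h => by
    rw [← haa m, ← Matrix.mul_assoc, hab i m h, Matrix.zero_mul]
  have hAb : ∀ i m, i ≠ m → ρ i * a m = 0 := fun i m h => by
    rw [← haa i, Matrix.mul_assoc, hab i m h, Matrix.mul_zero]
  have hAB : ∀ i m, i ≠ m → ρ i * ρ m = 0 := fun i m h => by
    rw [← haa m, ← Matrix.mul_assoc, hAb i m h, Matrix.zero_mul]
  -- the square root of ρhat j
  set s : ℝ := Real.sqrt (((k:ℝ) - 1)⁻¹) with hsdef
  have hs2 : ((s:ℂ))^2 = c := by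
    rw [hc]
    have : s^2 = ((k:ℝ) - 1)⁻¹ := Real.sq_sqrt hk1R
    push_cast [← this]
    ring
  set T : Matrix (Fin d) (Fin d) ℂ := ∑ i ∈ Finset.univ \ {j}, a i with hTdef
  set Sl : Matrix (Fin d) (Fin d) ℂ := ∑ i ∈ Finset.univ \ {l}, ρ i with hSldef
  set Q : Matrix (Fin d) (Fin d) ℂ := (s:ℂ) • T with hQdef
  have hTpsd : T.PosSemidef :=
    Finset.sum_induction _ _ (fun x y hx hy => hx.add hy) .zero (fun i _ => hapsd i)
  have hQpsd : Q.PosSemidef := psd_smul_real hTpsd (Real.sqrt_nonneg _)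
  have hTT : T * T = ∑ i ∈ Finset.univ \ {j}, ρ i := by
    rw [hTdef, sum_mul_sum_orthog _ _ _ _ (fun i _ m _ h => hab i m h),
      Finset.inter_self]
    exact Finset.sum_congr rfl fun i _ => haa i
  have hQsq : Q ^ 2 = ρhat j := by
    rw [hQdef, smul_pow, hs2, pow_two, hTT, hρhat j]
  have hρhatj_psd : (ρhat j).PosSemidef := hQsq ▸ hQpsd.pow 2
  have hpsqrtj : psqrt (ρhat j) = Q := by
    rw [psqrt, dif_pos hρhatj_psd]
    exact (hQpsd.eq_sqrt_of_sq_eq _ hQsq).symm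
  -- the inner matrix
  set s2 : Finset (Fin k) := (Finset.univ \ {j}) ∩ (Finset.univ \ {l}) with hs2def
  have hTSl : T * Sl = ∑ i ∈ s2, a i * ρ i := by
    rw [hTdef, hSldef, sum_mul_sum_orthog _ _ _ _ (fun i _ m _ h => haB i m h)]
  have hkey : ∀ i, a i * ρ i * a i = ρ i * ρ i := fun i => by
    rw [← haa i]; noncomm_ring
  have hTSlT : T * Sl * T = ∑ i ∈ s2, ρ i * ρ i := by
    rw [hTSl, hTdef, sum_mul_sum_orthog _ _ _ _
      (fun i _ m _ h => by rw [Matrix.mul_assoc, hAb i m h, Matrix.mul_zero]),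
      Finset.inter_eq_left.mpr (by rw [hs2def]; exact Finset.inter_subset_left)]
    exact Finset.sum_congr rfl fun i _ => hkey i
  have hM : Q * ρhat l * Q = (c * c) • ∑ i ∈ s2, ρ i * ρ i := by
    rw [hQdef, hρhat l, ← hSldef]
    simp only [smul_mul_assoc, mul_smul_comm, smul_smul]
    rw [hTSlT]
    congr 1
    rw [← hs2]; ring
  -- the square root of the inner matrix
  set P : Matrix (Fin d) (Fin d) ℂ := ∑ i ∈ s2, ρ i with hPdef
  set R : Matrix (Fin d) (Fin d) ℂ := c • P with hRdef
  have hPpsd : P.PosSemidef :=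
    Finset.sum_induction _ _ (fun x y hx hy => hx.add hy) .zero (fun i _ => hρ i)
  have hRpsd : R.PosSemidef := by
    rw [hRdef, hc]; exact psd_smul_real hPpsd hk1R
  have hPP : P * P = ∑ i ∈ s2, ρ i * ρ i := by
    rw [hPdef, sum_mul_sum_orthog _ _ _ _ (fun i _ m _ h => hAB i m h),
      Finset.inter_self]
  have hRsq : R ^ 2 = Q * ρhat l * Q := by
    rw [hRdef, smul_pow, hM, pow_two, pow_two, hPP]
  have hMpsd : (Q * ρhat l * Q).PosSemidef := hRsq ▸ hRpsd.pow 2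
  have hpsqrtM : psqrt (Q * ρhat l * Q) = R := by
    rw [psqrt, dif_pos hMpsd]
    exact (hRpsd.eq_sqrt_of_sq_eq _ hRsq).symm
  -- cardinality
  have hcard : s2.card = k - 2 := by
    have hs2eq : s2 = ({j, l} : Finset (Fin k))ᶜ := by
      ext x
      simp [hs2def, not_or]
    rw [hs2eq, Finset.card_compl, Finset.card_pair hjl, Fintype.card_fin]
  -- conclude
  rw [fidelity, hpsqrtj, hpsqrtM, hRdef, Matrix.trace_smul, hPdef, Matrix.trace_sum]
  have htrP : ∑ i ∈ s2, (ρ i).trace = ((k - 2 : ℕ) : ℂ) := by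
    rw [Finset.sum_congr rfl fun i _ => hρtr i, Finset.sum_const, hcard]
    simp
  rw [htrP, hc, smul_eq_mul]
  have hcast : ((k - 2 : ℕ) : ℂ) = (((k - 2 : ℕ) : ℝ) : ℂ) := by push_cast; ring
  rw [hcast, ← Complex.ofReal_mul, Complex.ofReal_re]
  have h2k : (2:ℕ) ≤ k := by omega
  rw [Nat.cast_sub h2k]
  push_cast
  rw [inv_mul_eq_div]
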